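/- If {A,B} is a minimum bisection with organized partition {A₁,A₂,B₁,B₂}, then D_C ≥ 0, i.e., E(A₁,A₂) + E(B₁,B₂) ≥ E(A₁,B₁) + E(A₂,B₂). -/

import Mathlib

open Finset

/-- Number of edges of `G` with one endpoint in `X` and the other in `Y`
(for disjoint `X`, `Y`). -/
def EC {V : Type*} [Fintype V] [DecidableEq V] (G : SimpleGraph V)
    [DecidableRel G.Adj] (X Y : Finset V) : ℕ :=
  ((X ×ˢ Y).filter (fun p => G.Adj p.1 p.2)).card

/-- `{R, S}` is a bisection of the vertex set. -/
def IsBisection {V : Type*} [Fintype V] [DecidableEq V] (R S : Finset V) : Prop :=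
  R ∪ S = Finset.univ ∧ Disjoint R S ∧ R.card = S.card

lemma EC_union_left {V : Type*} [Fintype V] [DecidableEq V] (G : SimpleGraph V)
    [DecidableRel G.Adj] (X X' Y : Finset V) (h : Disjoint X X') :
    EC G (X ∪ X') Y = EC G X Y + EC G X' Y := by
  unfold EC
  rw [union_product, filter_union, card_union_of_disjoint]
  exact disjoint_filter_filter (disjoint_product.2 (Or.inl h))

lemma EC_union_right {V : Type*} [Fintype V] [DecidableEq V] (G : SimpleGraph V)
    [DecidableRel G.Adj] (X Y Y' : Finset V) (h : Disjoint Y Y') :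
    EC G X (Y ∪ Y') = EC G X Y + EC G X Y' := by
  unfold EC
  rw [product_union, filter_union, card_union_of_disjoint]
  exact disjoint_filter_filter (disjoint_product.2 (Or.inr h))

lemma EC_comm {V : Type*} [Fintype V] [DecidableEq V] (G : SimpleGraph V)
    [DecidableRel G.Adj] (X Y : Finset V) : EC G X Y = EC G Y X := by
  unfold EC
  apply Finset.card_nbij (fun p => (p.2, p.1))
  · rintro ⟨a, b⟩ hp
    simp only [mem_coe, mem_filter, mem_product] at *
    exact ⟨⟨hp.1.2, hp.1.1⟩, hp.2.symm⟩
  · rintro ⟨a, b⟩ - ⟨c, d⟩ - h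
    simpa [Prod.ext_iff, and_comm] using h
  · rintro ⟨a, b⟩ hp
    refine ⟨(b, a), ?_, rfl⟩
    simp only [mem_coe, mem_filter, mem_product] at *
    exact ⟨⟨hp.1.2, hp.1.1⟩, hp.2.symm⟩

theorem stmt10 {V : Type*} [Fintype V] [DecidableEq V] (G : SimpleGraph V)
    [DecidableRel G.Adj] (n : ℕ) (A B A₁ A₂ B₁ B₂ : Finset V)
    (hcard : Fintype.card V = 4 * n)
    (hbis : IsBisection A B) (hA2n : A.card = 2 * n)
    (hmin : ∀ R S : Finset V, IsBisection R S → EC G A B ≤ EC G R S)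
    (hA : A = A₁ ∪ A₂) (hA12 : Disjoint A₁ A₂)
    (hB : B = B₁ ∪ B₂) (hB12 : Disjoint B₁ B₂)
    (hA1 : A₁.card = n) (hA2 : A₂.card = n) (hB1 : B₁.card = n) (hB2 : B₂.card = n)
    (horg : ∀ A₁' A₂' B₁' B₂' : Finset V,
      A = A₁' ∪ A₂' → Disjoint A₁' A₂' → B = B₁' ∪ B₂' → Disjoint B₁' B₂' →
      A₁'.card = n → A₂'.card = n → B₁'.card = n → B₂'.card = n →
      (EC G A₁ A₂ + EC G B₁ B₂ : ℤ) - EC G A₁ B₁ - EC G A₂ B₂ ≤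
        (EC G A₁' A₂' + EC G B₁' B₂' : ℤ) - EC G A₁' B₁' - EC G A₂' B₂') :
    EC G A₁ B₁ + EC G A₂ B₂ ≤ EC G A₁ A₂ + EC G B₁ B₂ := by
  obtain ⟨huniv, hAB, hcardAB⟩ := hbis
  have hA1B : Disjoint A₁ B := hAB.mono_left (hA ▸ subset_union_left)
  have hA2B : Disjoint A₂ B := hAB.mono_left (hA ▸ subset_union_right)
  have hA1B1 : Disjoint A₁ B₁ := hA1B.mono_right (hB ▸ subset_union_left)
  have hA1B2 : Disjoint A₁ B₂ := hA1B.mono_right (hB ▸ subset_union_right)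
  have hA2B1 : Disjoint A₂ B₁ := hA2B.mono_right (hB ▸ subset_union_left)
  have hA2B2 : Disjoint A₂ B₂ := hA2B.mono_right (hB ▸ subset_union_right)
  have hbis' : IsBisection (A₁ ∪ B₁) (A₂ ∪ B₂) := by
    refine ⟨?_, ?_, ?_⟩
    · rw [← huniv, hA, hB]; ac_rfl
    · exact disjoint_union_left.2
        ⟨disjoint_union_right.2 ⟨hA12, hA1B2⟩,
         disjoint_union_right.2 ⟨hA2B1.symm, hB12⟩⟩
    · rw [card_union_of_disjoint hA1B1, card_union_of_disjoint hA2B2,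
        hA1, hA2, hB1, hB2]
  have key := hmin _ _ hbis'
  rw [hA, hB] at key
  rw [EC_union_left _ _ _ _ hA12, EC_union_right _ _ _ _ hB12,
    EC_union_right _ _ _ _ hB12, EC_union_left _ _ _ _ hA1B1,
    EC_union_right _ _ _ _ hA2B2, EC_union_right _ _ _ _ hA2B2,
    EC_comm G B₁ A₂] at key
  omega
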